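/- Let T : ℝ₊^N → ℝ₊₊^N be continuous and concave (each coordinate function concave on ℝ₊^N), and let x* ∈ ℝ₊^N satisfy T(x*) = x*. For each d ∈ ℝ₊^N the function t ↦ T(td)/t is coordinatewise nonincreasing on (0,∞), so the asymptotic mapping S(d) := lim_{t→∞} T(td)/t exists in ℝ₊^N. Suppose v ∈ ℝ₊^N \ {0} and ρ ∈ [0,1) satisfy S(v) = ρv, and let ‖·‖ be a monotone norm on ℝ^N. If x₁ ∈ ℝ₊^N satisfies x₁ ≤ x* − εv or x₁ ≥ x* + εv for some ε > 0, then for every n ≥ 1, the estimation error of the fixed point iteration satisfies ρ^n ε ‖v‖ ≤ ‖T^n(x₁) − x*‖. -/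

import Mathlib

open Filter Topology

/-- Let `T : ℝ₊^N → ℝ₊₊^N` be continuous and concave with fixed point `x*`, let `S` be
its asymptotic mapping (given via the `Tendsto` hypothesis `S(d) = lim_{t→∞} T(td)/t`),
suppose `S(v) = ρv` with `v ∈ ℝ₊^N \ {0}` and `ρ ∈ [0,1)`, and let `nrm` be a monotone
norm. If `x₁ ∈ ℝ₊^N` satisfies `x₁ ≤ x* − εv` or `x₁ ≥ x* + εv` for some `ε > 0`, then
for every `n ≥ 1`: `ρ^n ε ‖v‖ ≤ ‖T^n(x₁) − x*‖`. -/
theorem stmt_13 (N : ℕ) (hN : 1 ≤ N)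
    (T : (Fin N → ℝ) → (Fin N → ℝ))
    (hT_pos : ∀ x : Fin N → ℝ, (∀ i, 0 ≤ x i) → ∀ i, 0 < T x i)
    (hT_cont : ContinuousOn T {x : Fin N → ℝ | ∀ i, 0 ≤ x i})
    (hT_conc : ∀ i : Fin N, ConcaveOn ℝ {x : Fin N → ℝ | ∀ j, 0 ≤ x j} (fun x => T x i))
    (xstar : Fin N → ℝ) (hxstar : ∀ i, 0 ≤ xstar i)
    (hfix : T xstar = xstar)
    (S : (Fin N → ℝ) → (Fin N → ℝ))
    (hS : ∀ d : Fin N → ℝ, (∀ i, 0 ≤ d i) →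
      Tendsto (fun t : ℝ => t⁻¹ • T (t • d)) atTop (𝓝 (S d)))
    (v : Fin N → ℝ) (hv_nonneg : ∀ i, 0 ≤ v i) (hv_ne : v ≠ 0)
    (ρ : ℝ) (hρ0 : 0 ≤ ρ) (hρ1 : ρ < 1) (heig : S v = ρ • v)
    (nrm : (Fin N → ℝ) → ℝ)
    (hnrm_zero : ∀ x, nrm x = 0 ↔ x = 0)
    (hnrm_smul : ∀ (a : ℝ) (x : Fin N → ℝ), nrm (a • x) = |a| * nrm x)
    (hnrm_add : ∀ x y : Fin N → ℝ, nrm (x + y) ≤ nrm x + nrm y)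
    (hnrm_mono : ∀ x y : Fin N → ℝ, (0 : Fin N → ℝ) ≤ x → x ≤ y → nrm x ≤ nrm y)
    (x₁ : Fin N → ℝ) (hx₁ : ∀ i, 0 ≤ x₁ i)
    (ε : ℝ) (hε : 0 < ε)
    (hinit : x₁ ≤ xstar - ε • v ∨ xstar + ε • v ≤ x₁) :
    ∀ n : ℕ, 1 ≤ n → ρ ^ n * ε * nrm v ≤ nrm (T^[n] x₁ - xstar) := by
  have hdom : ∀ x : Fin N → ℝ, (∀ i, 0 ≤ x i) → x ∈ {x : Fin N → ℝ | ∀ j, 0 ≤ x j} :=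
    fun x hx => hx
  -- Monotonicity of T on the nonnegative orthant
  have hmono : ∀ x y : Fin N → ℝ, (∀ i, 0 ≤ x i) → (∀ i, x i ≤ y i) → ∀ i, T x i ≤ T y i := by
    intro x y hx hxy i
    have hstep : ∀ s : ℝ, 1 ≤ s → (1 - s⁻¹) * T x i ≤ T y i := by
      intro s hs
      have hs0 : (0:ℝ) < s := lt_of_lt_of_le one_pos hs
      have hz : ∀ j, 0 ≤ (x + s • (y - x)) j := by
        intro j
        have h1 : 0 ≤ s * (y j - x j) := mul_nonneg hs0.le (sub_nonneg.2 (hxy j))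
        simpa [Pi.add_apply, Pi.smul_apply, smul_eq_mul] using add_nonneg (hx j) h1
      have ha : (0:ℝ) ≤ 1 - s⁻¹ := by
        have : s⁻¹ ≤ 1 := inv_le_one_of_one_le₀ hs
        linarith
      have hb : (0:ℝ) ≤ s⁻¹ := inv_nonneg.2 hs0.le
      have hab : (1 - s⁻¹) + s⁻¹ = 1 := by ring
      have hcomb : (1 - s⁻¹) • x + s⁻¹ • (x + s • (y - x)) = y := by
        funext j
        have hsne : s ≠ 0 := ne_of_gt hs0
        simp [Pi.add_apply, Pi.smul_apply, Pi.sub_apply, smul_eq_mul]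
        field_simp
        ring
      have hc := (hT_conc i).2 (hdom x hx) (hdom _ hz) ha hb hab
      rw [hcomb] at hc
      have hpos : 0 < T (x + s • (y - x)) i := hT_pos _ hz i
      have : (1 - s⁻¹) * T x i ≤ (1 - s⁻¹) * T x i + s⁻¹ * T (x + s • (y - x)) i := by
        nlinarith
      calc (1 - s⁻¹) * T x i ≤ (1 - s⁻¹) • T x i + s⁻¹ • T (x + s • (y - x)) i := by
            simpa [smul_eq_mul] using this
        _ ≤ T y i := hc
    have hlim : Tendsto (fun s : ℝ => (1 - s⁻¹) * T x i) atTop (𝓝 (T x i)) := by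
      have h1 : Tendsto (fun s : ℝ => s⁻¹) atTop (𝓝 (0:ℝ)) := tendsto_inv_atTop_zero
      have := ((tendsto_const_nhds.sub h1).mul tendsto_const_nhds :
        Tendsto (fun s : ℝ => (1 - s⁻¹) * T x i) atTop (𝓝 ((1 - 0) * T x i)))
      simpa using this
    exact le_of_tendsto hlim (eventually_atTop.2 ⟨1, hstep⟩)
  -- T(t d) ≥ t S(d) for t > 0
  have hSle : ∀ d : Fin N → ℝ, (∀ i, 0 ≤ d i) → ∀ t : ℝ, 0 < t →
      ∀ i, t * S d i ≤ T (t • d) i := by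
    intro d hd t ht i
    have htd : Tendsto (fun u : ℝ => u⁻¹ * T (u • d) i) atTop (𝓝 (S d i)) := by
      have := ((continuous_apply i).tendsto (S d)).comp (hS d hd)
      simpa [Function.comp_def, Pi.smul_apply, smul_eq_mul] using this
    have hanti : ∀ u : ℝ, t ≤ u → u⁻¹ * T (u • d) i ≤ t⁻¹ * T (t • d) i := by
      intro u hu
      have hu0 : (0:ℝ) < u := lt_of_lt_of_le ht hu
      have h0d : ∀ j, 0 ≤ ((0 : Fin N → ℝ)) j := fun j => le_refl 0
      have hud : ∀ j, 0 ≤ (u • d) j := fun j => by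
        simpa [Pi.smul_apply, smul_eq_mul] using mul_nonneg hu0.le (hd j)
      have ha : (0:ℝ) ≤ t / u := div_nonneg ht.le hu0.le
      have hb : (0:ℝ) ≤ 1 - t / u := by
        have : t / u ≤ 1 := div_le_one_of_le₀ hu hu0.le
        linarith
      have hab : t / u + (1 - t / u) = 1 := by ring
      have hcomb : (t / u) • (u • d) + (1 - t / u) • (0 : Fin N → ℝ) = t • d := by
        funext j
        have : u ≠ 0 := ne_of_gt hu0
        simp [Pi.add_apply, Pi.smul_apply, smul_eq_mul]
        field_simp
      have hc := (hT_conc i).2 (hdom _ hud) (hdom _ h0d) ha hb hab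
      rw [hcomb] at hc
      have h0pos : 0 < T (0 : Fin N → ℝ) i := hT_pos _ h0d i
      have hkey : (t / u) * T (u • d) i ≤ T (t • d) i := by
        have : (t / u) • T (u • d) i + (1 - t / u) • T (0 : Fin N → ℝ) i ≤ T (t • d) i := hc
        simp only [smul_eq_mul] at this
        nlinarith
      have : t⁻¹ * ((t / u) * T (u • d) i) ≤ t⁻¹ * T (t • d) i :=
        mul_le_mul_of_nonneg_left hkey (inv_nonneg.2 ht.le)
      have heq : t⁻¹ * ((t / u) * T (u • d) i) = u⁻¹ * T (u • d) i := by
        field_simp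
      linarith [heq ▸ this]
    have hle : S d i ≤ t⁻¹ * T (t • d) i :=
      le_of_tendsto htd (eventually_atTop.2 ⟨t, hanti⟩)
    have := mul_le_mul_of_nonneg_left hle ht.le
    calc t * S d i ≤ t * (t⁻¹ * T (t • d) i) := this
      _ = T (t • d) i := by field_simp
  -- T(s v) ≥ s ρ v
  have hTv : ∀ s : ℝ, 0 < s → ∀ i, s * ρ * v i ≤ T (s • v) i := by
    intro s hs i
    have := hSle v hv_nonneg s hs i
    rw [heig] at this
    simpa [Pi.smul_apply, smul_eq_mul, mul_assoc] using this
  -- T(x* + s v) ≥ s ρ v  (via monotonicity from s v)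
  have hTxv : ∀ s : ℝ, 0 < s → ∀ i, s * ρ * v i ≤ T (xstar + s • v) i := by
    intro s hs i
    refine le_trans (hTv s hs i) (hmono (s • v) (xstar + s • v) ?_ ?_ i)
    · intro j; simpa [Pi.smul_apply, smul_eq_mul] using mul_nonneg hs.le (hv_nonneg j)
    · intro j; simp [Pi.add_apply]; linarith [hxstar j]
  -- Lemma 3a : T(x* - δ v) ≤ x* - ρ δ v when x* - δ v ≥ 0, δ ≥ 0
  have h3a : ∀ δ : ℝ, 0 ≤ δ → (∀ i, 0 ≤ xstar i - δ * v i) →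
      ∀ i, T (xstar - δ • v) i ≤ xstar i - ρ * δ * v i := by
    intro δ hδ hp i
    have hp' : ∀ j, 0 ≤ (xstar - δ • v) j := by
      intro j; simpa [Pi.sub_apply, Pi.smul_apply, smul_eq_mul] using hp j
    have hstep : ∀ s : ℝ, 1 ≤ s →
        (1 - δ / (s + δ)) * T (xstar - δ • v) i ≤
          xstar i - δ * (1 - δ / (s + δ)) * ρ * v i := by
      intro s hs
      have hs0 : (0:ℝ) < s := lt_of_lt_of_le one_pos hs
      have hsδ : (0:ℝ) < s + δ := by linarith
      set θ : ℝ := δ / (s + δ) with hθdef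
      have hθ0 : 0 ≤ θ := div_nonneg hδ hsδ.le
      have hθ1 : θ ≤ 1 := by
        rw [hθdef, div_le_one hsδ]; linarith
      have hq : ∀ j, 0 ≤ (xstar + s • v) j := by
        intro j; simp [Pi.add_apply, Pi.smul_apply, smul_eq_mul]
        have := mul_nonneg hs0.le (hv_nonneg j); linarith [hxstar j]
      have hcomb : (1 - θ) • (xstar - δ • v) + θ • (xstar + s • v) = xstar := by
        funext j
        simp only [Pi.add_apply, Pi.smul_apply, Pi.sub_apply, smul_eq_mul, hθdef]
        field_simp
        ring
      have ha' : (0:ℝ) ≤ 1 - θ := by linarith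
      have hab' : (1 - θ) + θ = 1 := by ring
      have hc := (hT_conc i).2 (hdom _ hp') (hdom _ hq) ha' hθ0 hab'
      rw [hcomb] at hc; simp only [hfix] at hc
      simp only [smul_eq_mul] at hc
      have hq' : θ * (s * ρ * v i) ≤ θ * T (xstar + s • v) i :=
        mul_le_mul_of_nonneg_left (hTxv s hs0 i) hθ0
      have hθs : θ * s = δ * (1 - θ) := by
        rw [hθdef]; field_simp; ring
      have hθs2 : θ * (s * ρ * v i) = δ * (1 - θ) * ρ * v i := by
        rw [show θ * (s * ρ * v i) = (θ * s) * (ρ * v i) by ring, hθs]; ring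
      linarith
    have hθlim : Tendsto (fun s : ℝ => 1 - δ / (s + δ)) atTop (𝓝 (1:ℝ)) := by
      have h1 : Tendsto (fun s : ℝ => s + δ) atTop atTop :=
        tendsto_atTop_add_const_right _ δ tendsto_id
      have h2 : Tendsto (fun s : ℝ => δ / (s + δ)) atTop (𝓝 (0:ℝ)) := by
        have := h1.inv_tendsto_atTop
        have h3 := (tendsto_const_nhds (x := δ)).mul this
        simpa [div_eq_mul_inv] using h3
      have := (tendsto_const_nhds (x := (1:ℝ))).sub h2
      simpa using this
    have hL : Tendsto (fun s : ℝ => (1 - δ / (s + δ)) * T (xstar - δ • v) i) atTop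
        (𝓝 (T (xstar - δ • v) i)) := by
      have := hθlim.mul (tendsto_const_nhds (x := T (xstar - δ • v) i))
      simpa using this
    have hR : Tendsto (fun s : ℝ => xstar i - δ * (1 - δ / (s + δ)) * ρ * v i) atTop
        (𝓝 (xstar i - ρ * δ * v i)) := by
      have h1 := ((tendsto_const_nhds (x := δ)).mul hθlim).mul
        (tendsto_const_nhds (x := ρ))
      have h2 := (h1.mul (tendsto_const_nhds (x := v i)))
      have h3 := (tendsto_const_nhds (x := xstar i)).sub h2
      have h4 : xstar i - ρ * δ * v i = xstar i - δ * ρ * v i := by ring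
      rw [h4]
      simpa using h3
    exact le_of_tendsto_of_tendsto hL hR (eventually_atTop.2 ⟨1, hstep⟩)
  -- Lemma 3b : T(x* + δ v) ≥ x* + ρ δ v for δ ≥ 0
  have h3b : ∀ δ : ℝ, 0 ≤ δ →
      ∀ i, xstar i + ρ * δ * v i ≤ T (xstar + δ • v) i := by
    intro δ hδ i
    have hstep : ∀ s : ℝ, max 1 δ ≤ s →
        (1 - δ / s) * xstar i + ρ * δ * v i ≤ T (xstar + δ • v) i := by
      intro s hs
      have hs1 : (1:ℝ) ≤ s := le_trans (le_max_left _ _) hs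
      have hsδ : δ ≤ s := le_trans (le_max_right _ _) hs
      have hs0 : (0:ℝ) < s := lt_of_lt_of_le one_pos hs1
      set θ : ℝ := δ / s with hθdef
      have hθ0 : 0 ≤ θ := div_nonneg hδ hs0.le
      have hθ1 : θ ≤ 1 := by rw [hθdef, div_le_one hs0]; exact hsδ
      have hq : ∀ j, 0 ≤ (xstar + s • v) j := by
        intro j; simp [Pi.add_apply, Pi.smul_apply, smul_eq_mul]
        have := mul_nonneg hs0.le (hv_nonneg j); linarith [hxstar j]
      have hcomb : (1 - θ) • xstar + θ • (xstar + s • v) = xstar + δ • v := by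
        funext j
        simp only [Pi.add_apply, Pi.smul_apply, smul_eq_mul, hθdef]
        field_simp
        ring
      have ha' : (0:ℝ) ≤ 1 - θ := by linarith
      have hab' : (1 - θ) + θ = 1 := by ring
      have hc := (hT_conc i).2 (hdom _ hxstar) (hdom _ hq) ha' hθ0 hab'
      rw [hcomb] at hc; simp only [hfix] at hc
      simp only [smul_eq_mul] at hc
      have hq' : θ * (s * ρ * v i) ≤ θ * T (xstar + s • v) i :=
        mul_le_mul_of_nonneg_left (hTxv s hs0 i) hθ0
      have hθs : θ * s = δ := by rw [hθdef]; field_simp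
      have hθs2 : θ * (s * ρ * v i) = ρ * δ * v i := by
        rw [show θ * (s * ρ * v i) = (θ * s) * (ρ * v i) by ring, hθs]; ring
      linarith
    have hθlim : Tendsto (fun s : ℝ => δ / s) atTop (𝓝 (0:ℝ)) := by
      have := tendsto_inv_atTop_zero (𝕜 := ℝ)
      have h3 := (tendsto_const_nhds (x := δ)).mul this
      simpa [div_eq_mul_inv] using h3
    have hL : Tendsto (fun s : ℝ => (1 - δ / s) * xstar i + ρ * δ * v i) atTop
        (𝓝 (xstar i + ρ * δ * v i)) := by
      have h1 := (((tendsto_const_nhds (x := (1:ℝ))).sub hθlim).mul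
        (tendsto_const_nhds (x := xstar i))).add (tendsto_const_nhds (x := ρ * δ * v i))
      simpa using h1
    exact le_of_tendsto hL (eventually_atTop.2 ⟨max 1 δ, hstep⟩)
  -- Main induction
  have key : ∀ n : ℕ, (∀ i, 0 ≤ T^[n] x₁ i) ∧
      ((∀ i, T^[n] x₁ i ≤ xstar i - ε * ρ ^ n * v i) ∨
       (∀ i, xstar i + ε * ρ ^ n * v i ≤ T^[n] x₁ i)) := by
    intro n
    induction n with
    | zero =>
      refine ⟨hx₁, ?_⟩
      rcases hinit with h | h
      · exact Or.inl (fun i => by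
          have := h i
          simpa [Pi.sub_apply, Pi.smul_apply, smul_eq_mul] using this)
      · exact Or.inr (fun i => by
          have := h i
          simpa [Pi.add_apply, Pi.smul_apply, smul_eq_mul] using this)
    | succ n ih =>
      obtain ⟨hnn, hAB⟩ := ih
      have hδ0 : 0 ≤ ε * ρ ^ n := mul_nonneg hε.le (pow_nonneg hρ0 n)
      have hiter : T^[n+1] x₁ = T (T^[n] x₁) := Function.iterate_succ_apply' T n x₁
      constructor
      · intro i; rw [hiter]; exact (hT_pos _ hnn i).le
      · rcases hAB with hA | hB
        · left
          intro i
          rw [hiter]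
          have hp : ∀ j, 0 ≤ xstar j - (ε * ρ ^ n) * v j := by
            intro j; have := hA j; have := hnn j; linarith
          have h1 : T (T^[n] x₁) i ≤ T (xstar - (ε * ρ ^ n) • v) i := by
            refine hmono _ _ hnn (fun j => ?_) i
            have := hA j
            simpa [Pi.sub_apply, Pi.smul_apply, smul_eq_mul] using this
          have h2 := h3a (ε * ρ ^ n) hδ0 hp i
          have heq : ρ * (ε * ρ ^ n) * v i = ε * ρ ^ (n+1) * v i := by ring
          linarith [heq ▸ h2]
        · right
          intro i
          rw [hiter]
          have h1 : T (xstar + (ε * ρ ^ n) • v) i ≤ T (T^[n] x₁) i := by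
            refine hmono _ _ (fun j => ?_) (fun j => ?_) i
            · have := mul_nonneg hδ0 (hv_nonneg j)
              simp [Pi.add_apply, Pi.smul_apply, smul_eq_mul]
              linarith [hxstar j]
            · have := hB j
              simpa [Pi.add_apply, Pi.smul_apply, smul_eq_mul] using this
          have h2 := h3b (ε * ρ ^ n) hδ0 i
          have heq : ρ * (ε * ρ ^ n) * v i = ε * ρ ^ (n+1) * v i := by ring
          linarith [heq ▸ h2]
  -- Conclude
  intro n hn
  obtain ⟨hnn, hAB⟩ := key n
  have hδ0 : 0 ≤ ε * ρ ^ n := mul_nonneg hε.le (pow_nonneg hρ0 n)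
  have hsmul0 : (0 : Fin N → ℝ) ≤ (ε * ρ ^ n) • v := by
    intro j
    simpa [Pi.smul_apply, smul_eq_mul] using mul_nonneg hδ0 (hv_nonneg j)
  have hgoal : (ρ ^ n * ε) * nrm v ≤ nrm (T^[n] x₁ - xstar) := by
    rcases hAB with hA | hB
    · have hle : (ε * ρ ^ n) • v ≤ xstar - T^[n] x₁ := by
        intro j
        have := hA j
        simp [Pi.smul_apply, Pi.sub_apply, smul_eq_mul]
        linarith
      have h1 : nrm ((ε * ρ ^ n) • v) ≤ nrm (xstar - T^[n] x₁) :=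
        hnrm_mono _ _ hsmul0 hle
      have h2 : nrm (xstar - T^[n] x₁) = nrm (T^[n] x₁ - xstar) := by
        have : xstar - T^[n] x₁ = (-1 : ℝ) • (T^[n] x₁ - xstar) := by
          funext j; simp only [Pi.sub_apply, Pi.smul_apply, smul_eq_mul]; ring
        rw [this, hnrm_smul]; simp
      have h3 : nrm ((ε * ρ ^ n) • v) = (ε * ρ ^ n) * nrm v := by
        rw [hnrm_smul]; rw [abs_of_nonneg hδ0]
      calc (ρ ^ n * ε) * nrm v = (ε * ρ ^ n) * nrm v := by ring
        _ = nrm ((ε * ρ ^ n) • v) := h3.symm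
        _ ≤ nrm (xstar - T^[n] x₁) := h1
        _ = nrm (T^[n] x₁ - xstar) := h2
    · have hle : (ε * ρ ^ n) • v ≤ T^[n] x₁ - xstar := by
        intro j
        have := hB j
        simp [Pi.smul_apply, Pi.sub_apply, smul_eq_mul]
        linarith
      have h1 : nrm ((ε * ρ ^ n) • v) ≤ nrm (T^[n] x₁ - xstar) :=
        hnrm_mono _ _ hsmul0 hle
      have h3 : nrm ((ε * ρ ^ n) • v) = (ε * ρ ^ n) * nrm v := by
        rw [hnrm_smul]; rw [abs_of_nonneg hδ0]
      calc (ρ ^ n * ε) * nrm v = (ε * ρ ^ n) * nrm v := by ring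
        _ = nrm ((ε * ρ ^ n) • v) := h3.symm
        _ ≤ nrm (T^[n] x₁ - xstar) := h1
  simpa [mul_assoc] using hgoal
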